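/- Let U ⊆ ℝⁿ be open and let u : U → ℝ be upper semicontinuous and satisfy comparisons with cones from above in U. Then u is continuous on U. Moreover, if R > 0, x, y ∈ U are such that B(x,R) ∪ B(y,R) ⋐ U and |x − y| ≤ R, and k ≥ 0 satisfies osc_{B(x,R) ∪ B(y,R)} u ≤ R · M_k, then |u(x) − u(y)| ≤ K_k |x − y|. -/

import Mathlib

open Set Metric MeasureTheory Filter Bornology
open scoped RealInnerProductSpace

noncomputable section

abbrev Euc (n : ℕ) := EuclideanSpace ℝ (Fin n)

variable {n : ℕ}

/-- The Lagrangian of `H`, an extended real number. -/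
def Lag (H : Euc n → ℝ) (q : Euc n) : EReal :=
  ⨆ p : Euc n, ((⟪p, q⟫ - H p : ℝ) : EReal)

/-- `T^t u (x)`, with supremum taken over `y ∈ S`. Points `y` where the Lagrangian term
is `+∞` contribute nothing, since no real number equals `-∞`. -/
def TupOn (H : Euc n → ℝ) (S : Set (Euc n)) (u : Euc n → ℝ) (t : ℝ) (x : Euc n) : ℝ :=
  if t = 0 then u x
  else sSup {r : ℝ | ∃ y ∈ S, (r : EReal) = (u y : EReal) - (t : EReal) * Lag H (t⁻¹ • (y - x))}

/-- `T_t u (x)`, with infimum taken over `y ∈ S`. -/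
def TdnOn (H : Euc n → ℝ) (S : Set (Euc n)) (u : Euc n → ℝ) (t : ℝ) (x : Euc n) : ℝ :=
  if t = 0 then u x
  else sInf {r : ℝ | ∃ y ∈ S, (r : EReal) = (u y : EReal) + (t : EReal) * Lag H (t⁻¹ • (x - y))}

/-- `S⁺ u (x) = limsup_{t ↓ 0} (T^t u(x) - u(x))/t`. -/
def Splus (H : Euc n → ℝ) (U : Set (Euc n)) (u : Euc n → ℝ) (x : Euc n) : ℝ :=
  limsup (fun t => (TupOn H U u t x - u x) / t) (nhdsWithin 0 (Ioi 0))

/-- The oscillation `osc_U u = sup_U u - inf_U u`. -/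
def oscOn (u : Euc n → ℝ) (U : Set (Euc n)) : ℝ := sSup (u '' U) - sInf (u '' U)

/-- `U_r = {x ∈ U : dist(x, ∂U) > r}`. -/
def inUr (U : Set (Euc n)) (r : ℝ) : Set (Euc n) := {x ∈ U | r < infDist x (frontier U)}

/-- The cone function `C_k(x) = max {p·x : H(p) = k}`. -/
def coneFn (H : Euc n → ℝ) (k : ℝ) (x : Euc n) : ℝ :=
  sSup {r : ℝ | ∃ p, H p = k ∧ r = ⟪p, x⟫}

/-- The subdifferential of `H` at `p`. -/
def subdiff (H : Euc n → ℝ) (p : Euc n) : Set (Euc n) :=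
  {q | ∀ p', H p + ⟪q, p' - p⟫ ≤ H p'}

/-- `Γ_k`: subgradients of `H` at points of the level set `H⁻¹(k)`. -/
def GammaSet (H : Euc n → ℝ) (k : ℝ) : Set (Euc n) :=
  {q | ∃ p, H p = k ∧ q ∈ subdiff H p}

/-- `W_k`: subgradients of `H` at points of the sublevel set `H⁻¹([0,k])`. -/
def WSet (H : Euc n → ℝ) (k : ℝ) : Set (Euc n) :=
  {q | ∃ p, 0 ≤ H p ∧ H p ≤ k ∧ q ∈ subdiff H p}

/-- `u ∈ Lip_loc(U)`: `u` is locally Lipschitz on `U`. -/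
def LocLipOn (u : Euc n → ℝ) (U : Set (Euc n)) : Prop :=
  ∀ x ∈ U, ∃ K : NNReal, ∃ s ∈ nhdsWithin x U, LipschitzOnWith K u s

/-- `ess sup_V H(Dv)`, defined to be `+∞` if `v` is not locally Lipschitz in `V`.
Here `Dv` is the a.e.-defined gradient (Rademacher). -/
def essSupH (H : Euc n → ℝ) (V : Set (Euc n)) (v : Euc n → ℝ) : EReal :=
  haveI := Classical.propDecidable (LocLipOn v V)
  if LocLipOn v V then
    essSup (fun x => ((H (gradient v x) : ℝ) : EReal)) (volume.restrict V)
  else ⊤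

/-- `u` is absolutely subminimizing for `H` in `U`. -/
def AbsSubmin (H : Euc n → ℝ) (U : Set (Euc n)) (u : Euc n → ℝ) : Prop :=
  LocLipOn u U ∧
  ∀ V : Set (Euc n), IsOpen V → IsCompact (closure V) → closure V ⊆ U →
    ∀ v : Euc n → ℝ, LocLipOn v V → ContinuousOn v (closure V) →
      EqOn v u (frontier V) → (∀ x ∈ V, v x ≤ u x) →
        essSupH H V u ≤ essSupH H V v

/-- `u` is absolutely superminimizing for `H` in `U`. -/
def AbsSupermin (H : Euc n → ℝ) (U : Set (Euc n)) (u : Euc n → ℝ) : Prop :=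
  LocLipOn u U ∧
  ∀ V : Set (Euc n), IsOpen V → IsCompact (closure V) → closure V ⊆ U →
    ∀ v : Euc n → ℝ, LocLipOn v V → ContinuousOn v (closure V) →
      EqOn v u (frontier V) → (∀ x ∈ V, u x ≤ v x) →
        essSupH H V u ≤ essSupH H V v

/-- `u` satisfies comparisons with cones from above in `U`. -/
def CmpConesAbove (H : Euc n → ℝ) (U : Set (Euc n)) (u : Euc n → ℝ) : Prop :=
  ∀ k : ℝ, 0 ≤ k → ∀ V : Set (Euc n), IsOpen V → IsCompact (closure V) → closure V ⊆ U →
    ∀ x₀, x₀ ∉ V →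
      sSup ((fun x => u x - coneFn H k (x - x₀)) '' closure V) =
      sSup ((fun x => u x - coneFn H k (x - x₀)) '' frontier V)

/-- `u` satisfies the convexity criterion in `U`. -/
def ConvexityCriterion (H : Euc n → ℝ) (U : Set (Euc n)) (u : Euc n → ℝ) : Prop :=
  ∀ V : Set (Euc n), IsOpen V → IsCompact (closure V) → closure V ⊆ U →
    ∃ δ > (0:ℝ), ∀ x ∈ V, ConvexOn ℝ (Icc 0 δ) (fun t => TupOn H U u t x)

/-- `u` satisfies the pointwise convexity criterion in `U`. -/
def PtwiseCC (H : Euc n → ℝ) (U : Set (Euc n)) (u : Euc n → ℝ) : Prop :=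
  UpperSemicontinuousOn (Splus H U u) U ∧
  ∀ x ∈ U, ∃ δ > (0:ℝ), ConvexOn ℝ (Icc 0 δ) (fun t => TupOn H U u t x)

end


section CCAAux

open Set Metric Bornology Filter
open scoped RealInnerProductSpace

lemma cca_exists_unit {n : ℕ} (hn : 1 ≤ n) : ∃ e : Euc n, ‖e‖ = 1 := by
  refine ⟨EuclideanSpace.single (⟨0, hn⟩ : Fin n) (1 : ℝ), ?_⟩
  rw [EuclideanSpace.norm_single]; norm_num

lemma cca_usc_bddAbove {n : ℕ} {f : Euc n → ℝ} {s : Set (Euc n)} (hs : IsCompact s)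
    (hf : UpperSemicontinuousOn f s) : BddAbove (f '' s) := by
  rcases s.eq_empty_or_nonempty with rfl | hne
  · simp
  have key : ∀ x ∈ s, ∃ o : Set (Euc n), IsOpen o ∧ x ∈ o ∧ ∀ z ∈ o ∩ s, f z < f x + 1 := by
    intro x hx
    have h := hf x hx (f x + 1) (by linarith)
    rw [eventually_nhdsWithin_iff] at h
    rcases _root_.eventually_nhds_iff.1 h with ⟨o, ho1, ho2, ho3⟩
    exact ⟨o, ho2, ho3, fun z hz => ho1 z hz.1 hz.2⟩
  choose! o ho hxo hbound using key
  obtain ⟨t, hts, hcov⟩ := hs.elim_nhds_subcover o (fun x hx => (ho x hx).mem_nhds (hxo x hx))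
  rcases hne with ⟨x₀, hx₀⟩
  have htne : t.Nonempty := by
    rcases mem_iUnion₂.1 (hcov hx₀) with ⟨i, hi, _⟩
    exact ⟨i, hi⟩
  refine ⟨t.sup' htne (fun x => f x + 1), ?_⟩
  rintro r ⟨z, hz, rfl⟩
  rcases mem_iUnion₂.1 (hcov hz) with ⟨i, hi, hzi⟩
  exact le_trans (hbound i (hts i hi) z ⟨hzi, hz⟩).le
    (Finset.le_sup' (fun x => f x + 1) hi)

lemma cca_closure_punctured {n : ℕ} (hn : 1 ≤ n) {c x : Euc n} {ρ : ℝ} (hρ : 0 < ρ)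
    (hx : x ∈ ball c ρ) : closure (ball c ρ \ {x}) = closedBall c ρ := by
  apply Subset.antisymm
  · exact (closure_mono diff_subset).trans (by rw [closure_ball c hρ.ne'])
  · rw [← closure_ball c hρ.ne']
    have : ball c ρ ⊆ closure (ball c ρ \ {x}) := by
      intro w hw
      by_cases hwx : w = x
      · subst hwx
        rw [mem_closure_iff_nhds]
        intro tt htt
        rcases Metric.mem_nhds_iff.1 htt with ⟨δ, hδ, hball⟩
        rcases Metric.mem_nhds_iff.1 ((isOpen_ball.mem_nhds hw)) with ⟨δ2, hδ2, hball2⟩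
        obtain ⟨e, he⟩ := cca_exists_unit hn
        set δ' := min δ δ2 / 2 with hδ'
        have hδ'pos : 0 < δ' := by positivity
        have hdist : dist (w + δ' • e) w = δ' := by
          rw [dist_eq_norm]
          simp [norm_smul, he, abs_of_pos hδ'pos]
        have hlt : δ' < min δ δ2 := half_lt_self (lt_min hδ hδ2)
        refine ⟨w + δ' • e, hball (mem_ball.2 ?_), hball2 (mem_ball.2 ?_), ?_⟩
        · rw [hdist]; exact hlt.trans_le (min_le_left _ _)
        · rw [hdist]; exact hlt.trans_le (min_le_right _ _)
        · simp only [mem_singleton_iff]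
          intro hcontra
          rw [hcontra] at hdist
          simp at hdist
          exact hδ'pos.ne' hdist.symm
      · exact subset_closure ⟨hw, hwx⟩
    exact (closure_mono this).trans (by rw [closure_closure])

lemma cca_frontier_punctured {n : ℕ} (hn : 1 ≤ n) {c x : Euc n} {ρ : ℝ} (hρ : 0 < ρ)
    (hx : x ∈ ball c ρ) : frontier (ball c ρ \ {x}) = sphere c ρ ∪ {x} := by
  have hopen : IsOpen (ball c ρ \ {x}) := isOpen_ball.sdiff isClosed_singleton
  rw [frontier, hopen.interior_eq, cca_closure_punctured hn hρ hx, diff_diff_right,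
    closedBall_diff_ball, inter_eq_self_of_subset_right (by
      simpa using (ball_subset_closedBall hx))]

lemma cca_cone_package {n : ℕ} (hn : 1 ≤ n) (H : Euc n → ℝ)
    (hHconv : ConvexOn ℝ Set.univ H) (hH0 : H 0 = 0) (hHnonneg : ∀ p, 0 ≤ H p)
    (hHzb : Bornology.IsBounded {p : Euc n | H p = 0}) :
    ∃ Kfn : ℝ → ℝ, (∀ k, 0 ≤ Kfn k) ∧
      (∀ k, 0 ≤ k → ∀ x, coneFn H k x ≤ Kfn k * ‖x‖) ∧
      (∀ k, 0 ≤ k → ∀ x, 0 ≤ coneFn H k x) ∧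
      (∀ k, 0 ≤ k → coneFn H k 0 = 0) ∧
      (∀ k, 0 ≤ k → ∀ x, ‖x‖ * sInf (coneFn H k '' sphere (0:Euc n) 1) ≤ coneFn H k x) ∧
      (∀ C : ℝ, ∃ k, 0 ≤ k ∧ C ≤ sInf (coneFn H k '' sphere (0:Euc n) 1)) := by
  have hHcont : Continuous H :=
    continuousOn_univ.1 (hHconv.continuousOn isOpen_univ)
  -- bounded zero set inside a ball
  obtain ⟨r0, hr0sub⟩ := hHzb.subset_ball 0
  have hr0pos : 0 < r0 := by
    have : (0 : Euc n) ∈ ball (0 : Euc n) r0 := hr0sub (by simp [hH0])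
    simpa using this
  -- ε := min of H on sphere r0
  obtain ⟨e, he⟩ := cca_exists_unit hn
  have hsne : (sphere (0 : Euc n) r0).Nonempty := by
    refine ⟨r0 • e, ?_⟩
    simp [norm_smul, he, abs_of_pos hr0pos]
  obtain ⟨pm, hpm, hpmmin⟩ :=
    (isCompact_sphere (0 : Euc n) r0).exists_isMinOn hsne hHcont.continuousOn
  set ε := H pm with hε
  have hεpos : 0 < ε := by
    rcases (hHnonneg pm).lt_or_eq with h | h
    · exact h
    · exfalso
      have : pm ∈ ball (0 : Euc n) r0 := hr0sub (by simp [← h])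
      rw [mem_ball, dist_zero_right] at this
      rw [mem_sphere_zero_iff_norm] at hpm
      linarith
  -- coercivity
  have hcoer : ∀ p : Euc n, r0 ≤ ‖p‖ → ε * (‖p‖ / r0) ≤ H p := by
    intro p hp
    have hpnorm : 0 < ‖p‖ := lt_of_lt_of_le hr0pos hp
    set lam := r0 / ‖p‖ with hlam
    have hlam0 : 0 < lam := by positivity
    have hlam1 : lam ≤ 1 := by
      rw [hlam, div_le_one hpnorm]; exact hp
    have hq : H (lam • p) ≤ lam * H p := by
      have := hHconv.2 (mem_univ p) (mem_univ (0 : Euc n)) (le_of_lt hlam0)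
        (by linarith : (0:ℝ) ≤ 1 - lam) (by ring)
      simpa [hH0] using this
    have hqsphere : lam • p ∈ sphere (0 : Euc n) r0 := by
      rw [mem_sphere_zero_iff_norm, norm_smul, Real.norm_eq_abs, abs_of_pos hlam0, hlam,
        div_mul_cancel₀ _ hpnorm.ne']
    have hεq : ε ≤ H (lam • p) := hpmmin hqsphere
    have hle : ε ≤ lam * H p := le_trans hεq hq
    rw [hlam] at hle
    have h2 := mul_le_mul_of_nonneg_right hle (by positivity : (0:ℝ) ≤ ‖p‖ / r0)
    have h3 : r0 / ‖p‖ * H p * (‖p‖ / r0) = H p := by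
      field_simp
    rw [h3] at h2
    exact h2
  -- level set bound
  set Rk : ℝ → ℝ := fun k => r0 * max k ε / ε with hRk
  have hRknn : ∀ k, 0 ≤ Rk k := by
    intro k
    have : (0:ℝ) < max k ε := lt_max_of_lt_right hεpos
    positivity
  have hlev : ∀ k (p : Euc n), H p = k → ‖p‖ ≤ Rk k := by
    intro k p hp
    by_contra hcon
    push_neg at hcon
    have hRr0 : r0 ≤ Rk k := by
      have he0 : r0 = r0 * ε / ε := by field_simp
      rw [he0]
      show r0 * ε / ε ≤ r0 * max k ε / ε
      apply div_le_div_of_nonneg_right (c := ε) _ hεpos.le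
      exact mul_le_mul_of_nonneg_left (le_max_right _ _) hr0pos.le
    have hpr0 : r0 ≤ ‖p‖ := le_trans hRr0 hcon.le
    have h1 := hcoer p hpr0
    have h2 : ε * (Rk k / r0) < ε * (‖p‖ / r0) := by
      apply mul_lt_mul_of_pos_left _ hεpos
      exact div_lt_div_of_pos_right hcon hr0pos
    have h3 : ε * (Rk k / r0) = max k ε := by
      rw [hRk]; field_simp
    have hk : max k ε < H p := by
      have := lt_of_lt_of_le h2 h1
      linarith [h3]
    have hk2 : k < H p := lt_of_le_of_lt (le_max_left k ε) hk
    rw [hp] at hk2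
    exact lt_irrefl _ hk2
  -- ray hitting every level
  have hray : ∀ k, 0 ≤ k → ∀ z : Euc n, ‖z‖ = 1 → ∃ t : ℝ, 0 ≤ t ∧ H (t • z) = k := by
    intro k hk z hz
    set T := r0 * (k + ε) / ε with hT
    have hTr0 : r0 ≤ T := by
      have he0 : r0 = r0 * ε / ε := by field_simp
      rw [he0, hT]
      apply div_le_div_of_nonneg_right (c := ε) _ hεpos.le
      apply mul_le_mul_of_nonneg_left _ hr0pos.le
      linarith
    have hTpos : 0 < T := lt_of_lt_of_le hr0pos hTr0
    have hnormT : ‖T • z‖ = T := by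
      rw [norm_smul, Real.norm_eq_abs, abs_of_pos hTpos, hz, mul_one]
    have hHT : k ≤ H (T • z) := by
      have h1 := hcoer (T • z) (by rw [hnormT]; exact hTr0)
      have h2 : ε * (T / r0) = k + ε := by rw [hT]; field_simp
      rw [hnormT] at h1
      linarith
    have hcont2 : ContinuousOn (fun t : ℝ => H (t • z)) (Icc 0 T) :=
      (hHcont.comp (continuous_id.smul continuous_const)).continuousOn
    have hmem : k ∈ Icc (H ((0:ℝ) • z)) (H (T • z)) := by
      constructor
      · rw [zero_smul, hH0]; exact hk
      · exact hHT
    obtain ⟨t, ht, hft⟩ := intermediate_value_Icc hTpos.le hcont2 hmem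
    exact ⟨t, ht.1, hft⟩
  -- cone set facts
  set S : ℝ → Euc n → Set ℝ := fun k x => {r : ℝ | ∃ p, H p = k ∧ r = ⟪p, x⟫} with hS
  have hSconeFn : ∀ k x, coneFn H k x = sSup (S k x) := fun k x => rfl
  have hSne : ∀ k, 0 ≤ k → ∀ x, (S k x).Nonempty := by
    intro k hk x
    obtain ⟨t, ht, hft⟩ := hray k hk e he
    exact ⟨⟪t • e, x⟫, t • e, hft, rfl⟩
  have hSbdd : ∀ k x, BddAbove (S k x) := by
    intro k x
    refine ⟨Rk k * ‖x‖, ?_⟩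
    rintro r ⟨p, hp, rfl⟩
    calc ⟪p, x⟫ ≤ ‖p‖ * ‖x‖ := real_inner_le_norm p x
    _ ≤ Rk k * ‖x‖ := mul_le_mul_of_nonneg_right (hlev k p hp) (norm_nonneg x)
  have hUB : ∀ k, 0 ≤ k → ∀ x, coneFn H k x ≤ Rk k * ‖x‖ := by
    intro k hk x
    rw [hSconeFn]
    apply csSup_le (hSne k hk x)
    rintro r ⟨p, hp, rfl⟩
    calc ⟪p, x⟫ ≤ ‖p‖ * ‖x‖ := real_inner_le_norm p x
    _ ≤ Rk k * ‖x‖ := mul_le_mul_of_nonneg_right (hlev k p hp) (norm_nonneg x)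
  have hLB : ∀ k x (p : Euc n), H p = k → ⟪p, x⟫ ≤ coneFn H k x := by
    intro k x p hp
    exact le_csSup (hSbdd k x) ⟨p, hp, rfl⟩
  have hconeNN : ∀ k, 0 ≤ k → ∀ x, 0 ≤ coneFn H k x := by
    intro k hk x
    by_cases hx : x = 0
    · subst hx
      obtain ⟨t, ht, hft⟩ := hray k hk e he
      have := hLB k 0 (t • e) hft
      simpa using this
    · have hxn : 0 < ‖x‖ := norm_pos_iff.2 hx
      set z := ‖x‖⁻¹ • x with hz
      have hzn : ‖z‖ = 1 := by
        rw [hz, norm_smul, Real.norm_eq_abs, abs_of_pos (by positivity : (0:ℝ) < ‖x‖⁻¹)]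
        field_simp
      obtain ⟨t, ht, hft⟩ := hray k hk z hzn
      have hinner : ⟪t • z, x⟫ = t * (‖x‖⁻¹ * ⟪x, x⟫) := by
        rw [hz, real_inner_smul_left, real_inner_smul_left]
      have hinnernn : 0 ≤ ⟪t • z, x⟫ := by
        rw [hinner, real_inner_self_eq_norm_mul_norm]
        positivity
      exact le_trans hinnernn (hLB k x (t • z) hft)
  have hconeZero : ∀ k, 0 ≤ k → coneFn H k 0 = 0 := by
    intro k hk
    refine le_antisymm ?_ (hconeNN k hk 0)
    have := hUB k hk 0
    simpa using this
  -- sphere lower bound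
  have hMkBdd : ∀ k, 0 ≤ k → BddBelow (coneFn H k '' sphere (0:Euc n) 1) := by
    intro k hk
    refine ⟨0, ?_⟩
    rintro r ⟨z, hz, rfl⟩
    exact hconeNN k hk z
  have hsphLB : ∀ k, 0 ≤ k → ∀ x,
      ‖x‖ * sInf (coneFn H k '' sphere (0:Euc n) 1) ≤ coneFn H k x := by
    intro k hk x
    by_cases hx : x = 0
    · subst hx
      simpa using hconeNN k hk 0
    · have hxn : 0 < ‖x‖ := norm_pos_iff.2 hx
      set z := ‖x‖⁻¹ • x with hz
      have hzn : ‖z‖ = 1 := by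
        rw [hz, norm_smul, Real.norm_eq_abs, abs_of_pos (by positivity : (0:ℝ) < ‖x‖⁻¹)]
        field_simp
      have hzsph : z ∈ sphere (0:Euc n) 1 := by rwa [mem_sphere_zero_iff_norm]
      have h1 : sInf (coneFn H k '' sphere (0:Euc n) 1) ≤ coneFn H k z :=
        csInf_le (hMkBdd k hk) ⟨z, hzsph, rfl⟩
      have h2 : coneFn H k z ≤ ‖x‖⁻¹ * coneFn H k x := by
        rw [hSconeFn]
        apply csSup_le (hSne k hk z)
        rintro r ⟨p, hp, rfl⟩
        rw [hz, real_inner_smul_right]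
        exact mul_le_mul_of_nonneg_left (hLB k x p hp) (by positivity)
      calc ‖x‖ * sInf (coneFn H k '' sphere (0:Euc n) 1) ≤ ‖x‖ * coneFn H k z :=
            mul_le_mul_of_nonneg_left h1 hxn.le
      _ ≤ ‖x‖ * (‖x‖⁻¹ * coneFn H k x) := mul_le_mul_of_nonneg_left h2 hxn.le
      _ = coneFn H k x := by field_simp
  -- M_k can be made arbitrarily large
  have hMkLarge : ∀ C : ℝ, ∃ k, 0 ≤ k ∧ C ≤ sInf (coneFn H k '' sphere (0:Euc n) 1) := by
    intro C
    set ρ := max C 1 with hρ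
    have hρpos : (0:ℝ) < ρ := lt_of_lt_of_le one_pos (le_max_right _ _)
    have hbddH : BddAbove (H '' closedBall (0:Euc n) ρ) :=
      (isCompact_closedBall _ _).bddAbove_image hHcont.continuousOn
    set s := sSup (H '' closedBall (0:Euc n) ρ) with hs
    have hs0 : 0 ≤ s := by
      have : H 0 ≤ s := le_csSup hbddH ⟨0, by simp [hρpos.le], rfl⟩
      rwa [hH0] at this
    refine ⟨s + 1, by linarith, ?_⟩
    apply le_csInf
    · obtain ⟨z, hz⟩ := cca_exists_unit hn
      exact ⟨coneFn H (s+1) z, z, by rwa [mem_sphere_zero_iff_norm], rfl⟩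
    rintro b ⟨z, hzs, rfl⟩
    rw [mem_sphere_zero_iff_norm] at hzs
    obtain ⟨t, ht, hft⟩ := hray (s+1) (by linarith) z hzs
    have htρ : ρ ≤ t := by
      by_contra hcon
      push_neg at hcon
      have : t • z ∈ closedBall (0:Euc n) ρ := by
        rw [mem_closedBall, dist_zero_right, norm_smul, Real.norm_eq_abs, abs_of_nonneg ht,
          hzs, mul_one]
        exact hcon.le
      have : H (t • z) ≤ s := le_csSup hbddH ⟨t • z, this, rfl⟩
      rw [hft] at this
      linarith
    have hinner : ⟪t • z, z⟫ = t := by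
      rw [real_inner_smul_left, real_inner_self_eq_norm_mul_norm, hzs]
      ring
    calc C ≤ ρ := le_max_left _ _
    _ ≤ t := htρ
    _ = ⟪t • z, z⟫ := hinner.symm
    _ ≤ coneFn H (s+1) z := hLB (s+1) z (t • z) hft
  exact ⟨Rk, hRknn, hUB, hconeNN, hconeZero, hsphLB, hMkLarge⟩

lemma cca_key_est {n : ℕ} (hn : 1 ≤ n) (H : Euc n → ℝ) {U : Set (Euc n)}
    {u : Euc n → ℝ} (husc : UpperSemicontinuousOn u U) (hcca : CmpConesAbove H U u)
    (conezero : ∀ k, 0 ≤ k → coneFn H k 0 = 0)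
    (conenn : ∀ k, 0 ≤ k → ∀ x, 0 ≤ coneFn H k x)
    {c x : Euc n} {ρ : ℝ} (hρ : 0 < ρ) (hx : x ∈ ball c ρ) (hsub : closedBall c ρ ⊆ U)
    {k : ℝ} (hk : 0 ≤ k) {b : ℝ}
    (hb : ∀ z ∈ sphere c ρ, u z - coneFn H k (z - x) ≤ b)
    {w : Euc n} (hw : w ∈ closedBall c ρ) :
    u w - coneFn H k (w - x) ≤ max (u x) b := by
  set V := ball c ρ \ {x} with hV
  have hVopen : IsOpen V := isOpen_ball.sdiff isClosed_singleton
  have hclV : closure V = closedBall c ρ := cca_closure_punctured hn hρ hx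
  have hfrV : frontier V = sphere c ρ ∪ {x} := cca_frontier_punctured hn hρ hx
  have hcomp : IsCompact (closure V) := by rw [hclV]; exact isCompact_closedBall _ _
  have hsubU : closure V ⊆ U := by rw [hclV]; exact hsub
  have hxV : x ∉ V := by simp [hV]
  have heq := hcca k hk V hVopen hcomp hsubU x hxV
  obtain ⟨Bu, hBu⟩ := cca_usc_bddAbove hcomp (husc.mono hsubU)
  have hbdd : BddAbove ((fun z => u z - coneFn H k (z - x)) '' closure V) := by
    refine ⟨Bu, ?_⟩
    rintro r ⟨z, hz, rfl⟩
    have h1 : u z ≤ Bu := hBu ⟨z, hz, rfl⟩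
    have h2 : 0 ≤ coneFn H k (z - x) := conenn k hk _
    simp only
    linarith
  have hle1 : u w - coneFn H k (w - x) ≤
      sSup ((fun z => u z - coneFn H k (z - x)) '' closure V) := by
    apply le_csSup hbdd
    exact ⟨w, by rw [hclV]; exact hw, rfl⟩
  rw [heq] at hle1
  have hfrne : ((fun z => u z - coneFn H k (z - x)) '' frontier V).Nonempty := by
    refine ⟨u x - coneFn H k (x - x), x, ?_, rfl⟩
    rw [hfrV]; exact mem_union_right _ rfl
  refine le_trans hle1 (csSup_le hfrne ?_)
  rintro r ⟨z, hz, rfl⟩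
  rw [hfrV] at hz
  rcases hz with hz | hz
  · exact le_max_of_le_right (hb z hz)
  · rw [mem_singleton_iff] at hz
    subst hz
    simp only [sub_self, conezero k hk, sub_zero]
    exact le_max_left _ _

end CCAAux

/-- Functions satisfying comparisons with cones from above are continuous and locally
Lipschitz, quantitatively. -/
theorem cca_continuity_and_lipschitz {n : ℕ} (hn : 1 ≤ n) (H : Euc n → ℝ)
    (hHconv : ConvexOn ℝ Set.univ H) (hH0 : H 0 = 0) (hHnonneg : ∀ p, 0 ≤ H p)
    (hHzb : Bornology.IsBounded {p : Euc n | H p = 0})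
    (hHzi : interior {p : Euc n | H p = 0} = ∅)
    (U : Set (Euc n)) (hU : IsOpen U) (u : Euc n → ℝ)
    (husc : UpperSemicontinuousOn u U) (hcca : CmpConesAbove H U u) :
    ContinuousOn u U ∧
    ∀ R : ℝ, 0 < R → ∀ x y : Euc n,
      IsCompact (closure (ball x R ∪ ball y R)) → closure (ball x R ∪ ball y R) ⊆ U →
      dist x y ≤ R → ∀ k : ℝ, 0 ≤ k →
      oscOn u (ball x R ∪ ball y R) ≤ R * sInf ((coneFn H k) '' sphere (0 : Euc n) 1) →
      ∀ Kk : ℝ, IsLeast {K : ℝ | ∀ z, coneFn H k z ≤ K * ‖z‖} Kk →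
        |u x - u y| ≤ Kk * dist x y := by
  classical
  obtain ⟨Kfn, hKnn, hUB, hconeNN, hconeZero, hsphLB, hMkLarge⟩ :=
    cca_cone_package hn H hHconv hH0 hHnonneg hHzb
  have hcont : ContinuousOn u U := by
    intro x₀ hx₀
    obtain ⟨ε₀, hε₀, hballU⟩ := Metric.isOpen_iff.1 hU x₀ hx₀
    set r := ε₀ / 3 with hr
    have hrpos : 0 < r := by positivity
    have hsub2 : closedBall x₀ (2*r) ⊆ U := by
      intro z hz
      apply hballU
      rw [mem_ball]
      rw [mem_closedBall] at hz
      have : 2 * r < ε₀ := by rw [hr]; linarith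
      linarith
    set S₀ := sSup (u '' closedBall x₀ (2*r)) with hS₀
    have hbdd : BddAbove (u '' closedBall x₀ (2*r)) :=
      cca_usc_bddAbove (isCompact_closedBall _ _) (husc.mono hsub2)
    have hS₀le : ∀ z ∈ closedBall x₀ (2*r), u z ≤ S₀ := fun z hz => le_csSup hbdd ⟨z, hz, rfl⟩
    have hS₀x₀ : u x₀ ≤ S₀ := hS₀le x₀ (mem_closedBall_self (by positivity))
    obtain ⟨k, hk0, hMk⟩ := hMkLarge ((S₀ - u x₀ + 1)/r)
    set Mk := sInf (coneFn H k '' sphere (0:Euc n) 1) with hMkdef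
    have hMknn : 0 ≤ Mk := le_trans (div_nonneg (by linarith) hrpos.le) hMk
    have hrMk : S₀ - u x₀ + 1 ≤ r * Mk := by
      rw [div_le_iff₀ hrpos] at hMk
      nlinarith
    have hclaim : ∀ x ∈ ball x₀ r, u x₀ - Kfn k * ‖x₀ - x‖ ≤ max (u x) (u x₀ - 1) := by
      intro x hx
      have hxball : x ∈ ball x₀ (2*r) := by
        rw [mem_ball] at hx ⊢; linarith
      have hsph : ∀ z ∈ sphere x₀ (2*r), u z - coneFn H k (z - x) ≤ u x₀ - 1 := by
        intro z hz
        have hz1 : u z ≤ S₀ := hS₀le z (sphere_subset_closedBall hz)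
        have hzx : r ≤ ‖z - x‖ := by
          have h1 : dist z x₀ = 2*r := mem_sphere.1 hz
          have h2 : dist x x₀ < r := mem_ball.1 hx
          have h3 := dist_triangle z x x₀
          rw [← dist_eq_norm]
          linarith
        have hcone : r * Mk ≤ coneFn H k (z - x) :=
          le_trans (mul_le_mul_of_nonneg_right hzx hMknn) (hsphLB k hk0 _)
        linarith
      have hkey := cca_key_est hn H husc hcca hconeZero hconeNN (by positivity : (0:ℝ) < 2*r)
        hxball hsub2 hk0 hsph (mem_closedBall_self (by positivity))
      have hcone2 : coneFn H k (x₀ - x) ≤ Kfn k * ‖x₀ - x‖ := hUB k hk0 _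
      exact le_trans (by linarith) hkey
    rw [ContinuousWithinAt]
    apply tendsto_order.2
    constructor
    · intro a ha
      set ε' := min (u x₀ - a) 1 with hε'
      have hε'pos : 0 < ε' := lt_min (by linarith) one_pos
      set δ := min r (ε' / (Kfn k + 1)) with hδ
      have hKnn' : 0 ≤ Kfn k := hKnn k
      have hδpos : 0 < δ := lt_min hrpos (by positivity)
      have hev : ∀ x ∈ ball x₀ δ, a < u x := by
        intro x hxδ
        have hx : x ∈ ball x₀ r :=
          mem_ball.2 (lt_of_lt_of_le (mem_ball.1 hxδ) (min_le_left _ _))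
        have h1 := hclaim x hx
        have hKd : Kfn k * ‖x₀ - x‖ < ε' := by
          have h2 : ‖x₀ - x‖ < ε' / (Kfn k + 1) := by
            have : ‖x₀ - x‖ = dist x x₀ := by rw [dist_eq_norm, norm_sub_rev]
            rw [this]
            exact lt_of_lt_of_le (mem_ball.1 hxδ) (min_le_right _ _)
          calc Kfn k * ‖x₀ - x‖ ≤ (Kfn k + 1) * ‖x₀ - x‖ := by
                nlinarith [norm_nonneg (x₀ - x)]
          _ < (Kfn k + 1) * (ε' / (Kfn k + 1)) :=
                mul_lt_mul_of_pos_left h2 (by positivity)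
          _ = ε' := by field_simp
        have hε'1 : ε' ≤ 1 := min_le_right _ _
        have hε'a : ε' ≤ u x₀ - a := min_le_left _ _
        rcases le_max_iff.1 h1 with h | h
        · linarith
        · exfalso; linarith
      filter_upwards [mem_nhdsWithin_of_mem_nhds (ball_mem_nhds x₀ hδpos)] with x hx
      exact hev x hx
    · intro b hb
      exact husc x₀ hx₀ b hb
  have honeside : ∀ R : ℝ, 0 < R → ∀ x y : Euc n,
      IsCompact (closure (ball x R ∪ ball y R)) → closure (ball x R ∪ ball y R) ⊆ U →
      dist x y ≤ R → ∀ k : ℝ, 0 ≤ k →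
      oscOn u (ball x R ∪ ball y R) ≤ R * sInf ((coneFn H k) '' sphere (0 : Euc n) 1) →
      ∀ Kk : ℝ, (∀ z, coneFn H k z ≤ Kk * ‖z‖) →
        u x - u y ≤ Kk * dist x y := by
    intro R hR x y hcomp hWU hdxy k hk hosc Kk hKk
    set W := ball x R ∪ ball y R with hW
    set Mk := sInf (coneFn H k '' sphere (0:Euc n) 1) with hMkdef
    have hWcl : closedBall y R ⊆ closure W := by
      rw [← closure_ball y hR.ne']
      exact closure_mono subset_union_right
    have hWU' : W ⊆ U := subset_closure.trans hWU
    have hbddA : BddAbove (u '' W) :=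
      (cca_usc_bddAbove hcomp (husc.mono hWU)).mono (image_mono subset_closure)
    have hbddB : BddBelow (u '' W) :=
      (hcomp.bddBelow_image (hcont.mono hWU)).mono (image_mono subset_closure)
    have hWne : y ∈ W := Or.inr (mem_ball_self hR)
    have hSI : sSup (u '' W) - sInf (u '' W) ≤ R * Mk := hosc
    have hsph : ∀ z ∈ sphere y R, u z - coneFn H k (z - y) ≤ u y := by
      intro z hz
      have hzcl : z ∈ closure W := hWcl (sphere_subset_closedBall hz)
      have hzU : z ∈ U := hWU hzcl
      have hne : (nhdsWithin z W).NeBot := mem_closure_iff_nhdsWithin_neBot.1 hzcl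
      have htend : Filter.Tendsto u (nhdsWithin z W) (nhds (u z)) :=
        (hcont z hzU).mono_left (nhdsWithin_mono z hWU')
      have huz : u z ≤ sSup (u '' W) := le_of_tendsto htend (by
        filter_upwards [self_mem_nhdsWithin] with w hw
        exact le_csSup hbddA ⟨w, hw, rfl⟩)
      have hcone : R * Mk ≤ coneFn H k (z - y) := by
        have h1 : ‖z - y‖ = R := by rw [← dist_eq_norm]; exact mem_sphere.1 hz
        calc R * Mk = ‖z - y‖ * Mk := by rw [h1]
        _ ≤ coneFn H k (z - y) := hsphLB k hk _
      have hinf : sInf (u '' W) ≤ u y := csInf_le hbddB ⟨y, hWne, rfl⟩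
      linarith
    have hxcb : x ∈ closedBall y R := by rwa [mem_closedBall]
    have hmain := cca_key_est hn H husc hcca hconeZero hconeNN hR (mem_ball_self hR)
      (hWcl.trans hWU) hk hsph hxcb
    rw [max_self] at hmain
    have hKxy := hKk (x - y)
    rw [dist_eq_norm]
    linarith
  refine ⟨hcont, ?_⟩
  intro R hR x y hcomp hWU hdxy k hk hosc Kk hKkleast
  have h1 := honeside R hR x y hcomp hWU hdxy k hk hosc Kk hKkleast.1
  have hcomp' : IsCompact (closure (ball y R ∪ ball x R)) := by rwa [union_comm]
  have hWU'' : closure (ball y R ∪ ball x R) ⊆ U := by rwa [union_comm]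
  have hosc' : oscOn u (ball y R ∪ ball x R) ≤
      R * sInf ((coneFn H k) '' sphere (0 : Euc n) 1) := by rwa [union_comm]
  have h2 := honeside R hR y x hcomp' hWU'' (by rwa [dist_comm]) k hk hosc' Kk hKkleast.1
  rw [abs_sub_le_iff]
  exact ⟨h1, by rwa [dist_comm y x] at h2⟩
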